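/- Let m ≥ 3 be odd and let 0 < s < r be integers. Define the alternating threshold function f : {0,1}^m → {0,1} by f(x_1,...,x_m) = 1 if ∑_{i=1}^m (-1)^{i-1} x_i > 0 and f(x_1,...,x_m) = 0 otherwise. Then for any m × r matrix over {0,1} whose rows each contain exactly s ones, the r-tuple obtained by applying f to each column contains both a 0 and a 1. -/
import Mathlib


/-- The alternating threshold function: `f(x_1,…,x_m) = 1` iff
`∑_{i=1}^m (-1)^(i-1) x_i > 0` (here indices `i : Fin m` are 0-based, so the
sign of position `i` is `(-1)^i`). -/
def altThreshold (m : ℕ) (x : Fin m → Bool) : Bool :=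
  decide (0 < ∑ i : Fin m, (-1 : ℤ) ^ (i : ℕ) * (if x i then 1 else 0))

/-- For odd `m ≥ 3` and `0 < s < r`, applying the alternating threshold
function columnwise to an `m × r` Boolean matrix whose rows each contain
exactly `s` ones yields a tuple containing both a `0` and a `1`. -/
theorem altThreshold_polymorphism (m r s : ℕ) (hm : 3 ≤ m) (hodd : Odd m)
    (h0s : 0 < s) (hsr : s < r) (t : Fin m → Fin r → Bool)
    (hs : ∀ i : Fin m, (Finset.univ.filter fun j => t i j = true).card = s) :
    (∃ j : Fin r, altThreshold m (fun i => t i j) = true) ∧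
    (∃ j : Fin r, altThreshold m (fun i => t i j) = false) := by
  set S : Fin r → ℤ := fun j => ∑ i : Fin m, (-1 : ℤ) ^ (i : ℕ) * (if t i j then 1 else 0)
    with hS
  have htot : ∑ j : Fin r, S j = (s : ℤ) := by
    rw [Finset.sum_comm]
    have hrow : ∀ i : Fin m,
        (∑ j : Fin r, (-1 : ℤ) ^ (i : ℕ) * (if t i j then 1 else 0))
          = (-1 : ℤ) ^ (i : ℕ) * s := by
      intro i
      rw [← Finset.mul_sum]
      congr 1
      rw [Finset.sum_boole, ← hs i]
    simp only [hrow]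
    rw [← Finset.sum_mul, Fin.sum_univ_eq_sum_range, neg_one_geom_sum]
    simp [Nat.not_even_iff_odd.mpr hodd]
  have hthr : ∀ j, altThreshold m (fun i => t i j) = decide (0 < S j) := fun j => rfl
  constructor
  · by_contra h
    push_neg at h
    have hle : ∀ j : Fin r, S j ≤ 0 := by
      intro j
      have := h j
      rw [hthr j] at this
      simpa using this
    have : ∑ j : Fin r, S j ≤ 0 := Finset.sum_nonpos fun j _ => hle j
    omega
  · by_contra h
    push_neg at h
    have hge : ∀ j : Fin r, 1 ≤ S j := by
      intro j
      have := h j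
      rw [hthr j] at this
      simp only [ne_eq, decide_eq_false_iff_not, not_lt, Decidable.not_not] at this
      omega
    have : (r : ℤ) ≤ ∑ j : Fin r, S j := by
      calc (r : ℤ) = ∑ _j : Fin r, (1 : ℤ) := by simp
        _ ≤ ∑ j : Fin r, S j := Finset.sum_le_sum fun j _ => hge j
    omega
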